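/- Let p be an odd prime, L = F_{p^m}, σ = p^s with 0 < s < m, l, n, N ∈ L*, and v ∈ {0,1}, and suppose the product * = X(p,m,s,v,l,n,N) on L × L is a presemifield (−l ∉ L*^{σ−1} and t^{σ+1} − v t^σ − (v/N)t + 1/(nN) ≠ 0 for all t ∈ L). Let β, γ : L×L → L×L satisfy (1,0)*β(x) = x and γ(x)*(1,0) = (1,0)*x for all x, and define x∘y := β(γ(x)*y). Then (c,d) ∈ L × L lies in the middle nucleus of the semifield (L×L, +, ∘) if and only if both of the following hold: c − c^{σ²} = (nv(d + N d^σ))^σ − nv(d + N d^σ), and (nv)^σ (c − c^σ)^σ + nvN (c − c^σ) = (nN)^σ d^{σ²} − nN d. -/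
import Mathlib


/-- The first coordinate of the product `X(p,m,s,v,l,n,N)`. -/
def Xh {L : Type*} [Field L] (σ : ℕ) (l n N v a b c d : L) : L :=
  (a * c ^ σ - n * N * b * d ^ σ) + l * (a ^ σ * c - n * N * b ^ σ * d)
    + n * v * ((N * a * d ^ σ - b * c ^ σ) + l * (a ^ σ * d - N * b ^ σ * c))

/-- The product `X(p,m,s,v,l,n,N)` on `L × L`. -/
def Xmul {L : Type*} [Field L] (σ : ℕ) (l n N v : L) (x y : L × L) : L × L :=
  (Xh σ l n N v x.1 x.2 y.1 y.2, x.1 * y.2 + x.2 * y.1)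

lemma charP_of_card {L : Type*} [Field L] [Fintype L] {p m : ℕ} (hp : p.Prime)
    (hm : 0 < m) (hcard : Fintype.card L = p ^ m) : CharP L p := by
  haveI := ringChar.charP L
  obtain ⟨k, hrp, hc⟩ := FiniteField.card L (ringChar L)
  have hdvd : p ∣ (ringChar L) ^ (k : ℕ) := by
    rw [← hc, hcard]
    exact dvd_pow_self p hm.ne'
  have : p = ringChar L := (Nat.prime_dvd_prime_iff_eq hp hrp).1 (hp.dvd_of_dvd_pow hdvd)
  exact this ▸ ringChar.charP L

lemma Xmul_e_left {L : Type*} [Field L] (q : ℕ) (hq : q ≠ 0) (l n N v : L) (x : L × L) :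
    Xmul q l n N v (1, 0) x
      = (x.1 ^ q + l * x.1 + n * v * (N * x.2 ^ q + l * x.2), x.2) := by
  unfold Xmul Xh
  refine Prod.ext ?_ ?_ <;> simp [zero_pow hq] <;> ring

lemma Xmul_e_right {L : Type*} [Field L] (q : ℕ) (hq : q ≠ 0) (l n N v : L) (x : L × L) :
    Xmul q l n N v x (1, 0)
      = (x.1 + l * x.1 ^ q - n * v * (x.2 + l * N * x.2 ^ q), x.2) := by
  unfold Xmul Xh
  refine Prod.ext ?_ ?_ <;> simp [zero_pow hq] <;> ring

lemma linear_indep_pow {L : Type*} [Field L] [Fintype L] {q : ℕ} (hq1 : 1 < q)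
    (hcard : q < Fintype.card L) {a b a' b' : L}
    (h : ∀ t : L, a * t + b * t ^ q = a' * t + b' * t ^ q) : a = a' ∧ b = b' := by
  classical
  have hex : ∃ t : L, t ^ q ≠ t := by
    by_contra hno
    push_neg at hno
    set P : Polynomial L := Polynomial.X ^ q - Polynomial.X with hP
    have hdeg : P.natDegree ≤ q := by
      refine le_trans (Polynomial.natDegree_sub_le _ _) ?_
      simp [Polynomial.natDegree_X_pow, Polynomial.natDegree_X, hq1.le]
    have hne : P ≠ 0 := by
      intro h0
      have h1 : P.coeff q = 0 := by rw [h0]; simp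
      rw [hP] at h1
      simp only [Polynomial.coeff_sub, Polynomial.coeff_X_pow, Polynomial.coeff_X,
        if_pos rfl, if_neg (by omega : ¬ (1:ℕ) = q)] at h1
      norm_num at h1
    have hsub : (Finset.univ : Finset L) ⊆ P.roots.toFinset := by
      intro t _
      rw [Multiset.mem_toFinset, Polynomial.mem_roots hne]
      simp [hP, Polynomial.IsRoot, hno t]
    have h1 := Finset.card_le_card hsub
    have h2 := P.roots.toFinset_card_le
    have h3 := Polynomial.card_roots' P
    rw [Finset.card_univ] at h1
    omega
  obtain ⟨t0, ht0⟩ := hex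
  have hb : b = b' := by
    by_contra hbne
    have hfac : (b - b') * (t0 ^ q - t0) = 0 := by
      linear_combination h t0 - t0 * h 1
    rcases mul_eq_zero.1 hfac with h' | h'
    · exact hbne (by linear_combination h')
    · exact ht0 (by linear_combination h')
  refine ⟨?_, hb⟩
  have := h 1
  simp only [one_pow, mul_one] at this
  linear_combination this - hb

/-- Lemma 8.8: membership of `(c,d)` in the middle nucleus of the semifield associated
with `B(p,m,s,l,n,N)` (`v = 1`) or `C(p,m,s,l,-nN)` (`v = 0`) is equivalent to the two
displayed field equations. -/
theorem BC_middle_nucleus_equations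
    (p m s : ℕ) (hp : p.Prime) (hodd : Odd p) (hs : 0 < s) (hsm : s < m)
    (L : Type*) [Field L] [Fintype L] (hcard : Fintype.card L = p ^ m)
    (l n N : L) (hl0 : l ≠ 0) (hn0 : n ≠ 0) (hN0 : N ≠ 0)
    (v : L) (hv : v = 0 ∨ v = 1)
    (hl : ¬ ∃ t : L, t ≠ 0 ∧ t ^ (p ^ s - 1) = -l)
    (hpoly : ∀ t : L,
      t ^ (p ^ s + 1) - v * t ^ (p ^ s) - (v / N) * t + 1 / (n * N) ≠ 0)
    (β γ : L × L → L × L)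
    (hβ : ∀ x : L × L, Xmul (p ^ s) l n N v (1, 0) (β x) = x)
    (hγ : ∀ x : L × L, Xmul (p ^ s) l n N v (γ x) (1, 0) = Xmul (p ^ s) l n N v (1, 0) x)
    (circ : L × L → L × L → L × L)
    (hcirc : ∀ x y : L × L, circ x y = β (Xmul (p ^ s) l n N v (γ x) y)) :
    ∀ c d : L,
      (∀ x y : L × L, circ (circ x (c, d)) y = circ x (circ (c, d) y)) ↔
        (c - c ^ (p ^ (2 * s))
            = (n * v * (d + N * d ^ (p ^ s))) ^ (p ^ s) - n * v * (d + N * d ^ (p ^ s)) ∧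
          (n * v) ^ (p ^ s) * (c - c ^ (p ^ s)) ^ (p ^ s) + n * v * N * (c - c ^ (p ^ s))
            = (n * N) ^ (p ^ s) * d ^ (p ^ (2 * s)) - n * N * d) := by
  intro c d
  have hq0 : p ^ s ≠ 0 := pow_ne_zero _ hp.pos.ne'
  have hq1 : 1 < p ^ s := Nat.one_lt_pow hs.ne' hp.one_lt
  have hqm : p ^ s < Fintype.card L := by
    rw [hcard]; exact Nat.pow_lt_pow_right hp.one_lt hsm
  haveI : Fact p.Prime := ⟨hp⟩
  haveI hchar : CharP L p := charP_of_card hp (hs.trans hsm) hcard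
  have hadd : ∀ x y : L, (x + y) ^ p ^ s = x ^ p ^ s + y ^ p ^ s :=
    fun x y => add_pow_char_pow x y p s
  have hsub : ∀ x y : L, (x - y) ^ p ^ s = x ^ p ^ s - y ^ p ^ s :=
    fun x y => sub_pow_char_pow x y s
  have h2s : ∀ x : L, x ^ p ^ (2 * s) = (x ^ p ^ s) ^ p ^ s := by
    intro x; rw [← pow_mul, ← pow_add, two_mul]
  set mul := Xmul (p ^ s) l n N v with hmul
  have hAf : ∀ x : L × L, mul (1, 0) x
      = (x.1 ^ p ^ s + l * x.1 + n * v * (N * x.2 ^ p ^ s + l * x.2), x.2) :=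
    Xmul_e_left (p ^ s) hq0 l n N v
  have hBf : ∀ x : L × L, mul x (1, 0)
      = (x.1 + l * x.1 ^ p ^ s - n * v * (x.2 + l * N * x.2 ^ p ^ s), x.2) :=
    fun x => Xmul_e_right (p ^ s) hq0 l n N v x
  -- kernels
  have hker1 : ∀ x : L, x ^ p ^ s + l * x = 0 → x = 0 := by
    intro x hx
    by_contra hx0
    apply hl
    refine ⟨x, hx0, ?_⟩
    have hpow : x ^ p ^ s = x ^ (p ^ s - 1) * x := by
      rw [← pow_succ]; congr 1; omega
    have hfac : (x ^ (p ^ s - 1) + l) * x = 0 := by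
      rw [hpow] at hx; linear_combination hx
    rcases mul_eq_zero.1 hfac with h | h
    · linear_combination h
    · exact absurd h hx0
  have hker2 : ∀ x : L, x + l * x ^ p ^ s = 0 → x = 0 := by
    intro x hx
    by_contra hx0
    apply hl
    refine ⟨x⁻¹, inv_ne_zero hx0, ?_⟩
    have hpow : x ^ p ^ s = x ^ (p ^ s - 1) * x := by
      rw [← pow_succ]; congr 1; omega
    have hfac : (1 + l * x ^ (p ^ s - 1)) * x = 0 := by
      rw [hpow] at hx; linear_combination hx
    have h2 : 1 + l * x ^ (p ^ s - 1) = 0 := (mul_eq_zero.1 hfac).resolve_right hx0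
    have h3 : x ^ (p ^ s - 1) = -l⁻¹ := by
      field_simp
      linear_combination h2
    rw [inv_pow, h3, inv_neg, inv_inv]
  -- injectivity
  have hAinj : Function.Injective (mul (1, 0)) := by
    intro x y hxy
    rw [hAf x, hAf y] at hxy
    have h2 : x.2 = y.2 := (Prod.ext_iff.1 hxy).2
    have h1 := (Prod.ext_iff.1 hxy).1
    have h3 : (x.1 - y.1) ^ p ^ s + l * (x.1 - y.1) = 0 := by
      rw [hsub]
      rw [h2] at h1
      linear_combination h1
    have h4 : x.1 - y.1 = 0 := hker1 _ h3
    have h5 : x.1 = y.1 := by linear_combination h4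
    exact Prod.ext h5 h2
  have hBinj : Function.Injective (fun x : L × L => mul x (1, 0)) := by
    intro x y hxy
    simp only at hxy
    rw [hBf x, hBf y] at hxy
    have h2 : x.2 = y.2 := (Prod.ext_iff.1 hxy).2
    have h1 := (Prod.ext_iff.1 hxy).1
    have h3 : (x.1 - y.1) + l * (x.1 - y.1) ^ p ^ s = 0 := by
      rw [hsub]
      rw [h2] at h1
      linear_combination h1
    have h4 : x.1 - y.1 = 0 := hker2 _ h3
    have h5 : x.1 = y.1 := by linear_combination h4
    exact Prod.ext h5 h2
  have hAsurj : Function.Surjective (mul (1, 0)) :=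
    Finite.injective_iff_surjective.1 hAinj
  have hβinj : Function.Injective β := by
    intro x y hxy
    rw [← hβ x, ← hβ y, hxy]
  have hβ2 : ∀ x : L × L, (β x).2 = x.2 := by
    intro x
    have h := congrArg Prod.snd (hβ x)
    simpa [hmul, Xmul] using h
  have hγ2 : ∀ x : L × L, (γ x).2 = x.2 := by
    intro x
    have h := congrArg Prod.snd (hγ x)
    simpa [hmul, Xmul] using h
  have hγsurj : Function.Surjective γ := by
    intro z
    obtain ⟨x, hx⟩ := hAsurj (mul z (1, 0))
    exact ⟨x, hBinj (((hγ x).trans hx) : _)⟩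
  constructor
  · -- forward
    intro H
    have K' : ∀ z y : L × L,
        mul (γ (β (mul z (c, d)))) y = mul z (β (mul (γ (c, d)) y)) := by
      intro z y
      obtain ⟨x, rfl⟩ := hγsurj z
      have h := H x y
      simp only [hcirc] at h
      exact hβinj h
    set α := (γ ((c, d) : L × L)).1 with hαdef
    have hγu : γ ((c, d) : L × L) = (α, d) := Prod.ext rfl (hγ2 (c, d))
    have hβAu : β (mul (1, 0) (c, d)) = (c, d) := hAinj (hβ _)
    have hMe : γ (β (mul (1, 0) (c, d))) = (α, d) := by rw [hβAu, hγu]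
    set b0 := (γ (β (mul ((0 : L), (1 : L)) (c, d)))).1 with hb0def
    have hM01 : γ (β (mul ((0 : L), (1 : L)) (c, d))) = (b0, c) := by
      refine Prod.ext rfl ?_
      rw [hγ2, hβ2]
      simp [hmul, Xmul]
    have hP : ∀ y : L × L,
        β (mul (γ (c, d)) y) = (c * y.1 + b0 * y.2, d * y.1 + α * y.2) := by
      intro y
      have h1 := congrArg Prod.snd (K' (1, 0) y)
      have h2 := congrArg Prod.snd (K' ((0 : L), (1 : L)) y)
      rw [hMe] at h1
      rw [hM01] at h2
      set w := β (mul (γ (c, d)) y) with hw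
      simp only [hmul, Xmul] at h1 h2
      refine Prod.ext ?_ ?_
      · linear_combination -h2
      · linear_combination -h1
    have hS1 : ∀ t : L,
        (l * (α ^ p ^ s - n * v * N * d ^ p ^ s)) * t + (α - n * v * d) * t ^ p ^ s
          = (l * (c + n * v * d)) * t + (c ^ p ^ s + n * v * N * d ^ p ^ s) * t ^ p ^ s := by
      intro t
      have h := congrArg Prod.fst (K' (1, 0) (t, 0))
      rw [hMe, hP (t, 0)] at h
      simp only [hmul, Xmul, Xh] at h
      simp only [mul_zero, add_zero, zero_mul, zero_add, mul_one, one_mul, sub_zero,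
        zero_sub, zero_pow hq0, one_pow, mul_pow] at h
      linear_combination h
    have hS3 : ∀ t : L,
        (l * (b0 ^ p ^ s - n * v * N * c ^ p ^ s)) * t + (b0 - n * v * c) * t ^ p ^ s
          = (l * (-(n * N * d) - n * v * N * c)) * t
            + (-(n * N * d ^ p ^ s) - n * v * c ^ p ^ s) * t ^ p ^ s := by
      intro t
      have h := congrArg Prod.fst (K' ((0 : L), (1 : L)) (t, 0))
      rw [hM01, hP (t, 0)] at h
      simp only [hmul, Xmul, Xh] at h
      simp only [mul_zero, add_zero, zero_mul, zero_add, mul_one, one_mul, sub_zero,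
        zero_sub, zero_pow hq0, one_pow, mul_pow] at h
      linear_combination h
    obtain ⟨e5l, e1⟩ := linear_indep_pow hq1 hqm hS1
    obtain ⟨e6l, e2⟩ := linear_indep_pow hq1 hqm hS3
    have e5 := mul_left_cancel₀ hl0 e5l
    have e6 := mul_left_cancel₀ hl0 e6l
    have hoddpow : ∀ x : L, (-x) ^ p ^ s = -x ^ p ^ s :=
      fun x => Odd.neg_pow (hodd.pow) x
    constructor
    · have e1q := congrArg (· ^ p ^ s) e1
      simp only [hsub, hadd, mul_pow] at e1q
      simp only [h2s, mul_pow, hadd]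
      linear_combination e1q - e5
    · have e2q := congrArg (· ^ p ^ s) e2
      simp only [hsub, hadd, mul_pow, hoddpow] at e2q
      simp only [h2s, mul_pow, hsub]
      linear_combination e6 - e2q
  · -- backward
    rintro ⟨E1, E2⟩
    simp only [h2s, mul_pow, hadd, hsub] at E1 E2
    set aa := c ^ p ^ s + n * v * (d + N * d ^ p ^ s) with haa
    set bb := n * v * c - n * N * d ^ p ^ s - n * v * c ^ p ^ s with hbb
    have key : ∀ z y : L × L,
        mul (aa * z.1 + bb * z.2, d * z.1 + c * z.2) y
          = mul z (c * y.1 + bb * y.2, d * y.1 + aa * y.2) := by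
      intro z y
      refine Prod.ext ?_ ?_
      · simp only [hmul, Xmul, Xh]
        rw [haa, hbb]
        simp only [hadd, hsub, mul_pow]
        linear_combination
          (-(l * z.1 ^ p ^ s * y.1) - l * n * v * z.1 ^ p ^ s * y.2
            + n * v * N * z.1 * y.2 ^ p ^ s - n * N * z.2 * y.2 ^ p ^ s) * E1
          + (l * z.2 ^ p ^ s * y.1 + l * n * v * z.2 ^ p ^ s * y.2
            - z.1 * y.2 ^ p ^ s + n * v * z.2 * y.2 ^ p ^ s) * E2
      · simp only [hmul, Xmul]
        ring
    have k00 := key (1, 0) (1, 0)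
    norm_num at k00
    have hγu : γ ((c, d) : L × L) = (aa, d) := hBinj ((hγ (c, d)).trans k00.symm)
    have hGval : ∀ y : L × L,
        β (mul (γ (c, d)) y) = (c * y.1 + bb * y.2, d * y.1 + aa * y.2) := by
      intro y
      apply hAinj
      rw [hβ, hγu]
      have ky := key (1, 0) y
      norm_num at ky
      exact ky
    have hMval : ∀ z : L × L,
        γ (β (mul z (c, d))) = (aa * z.1 + bb * z.2, d * z.1 + c * z.2) := by
      intro z
      apply hBinj
      show mul _ (1, 0) = mul _ (1, 0)
      rw [hγ, hβ]
      have kz := key z (1, 0)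
      norm_num at kz
      exact kz.symm
    intro x y
    simp only [hcirc]
    rw [hMval, hGval, key]
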